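/- Let q be a power of 3 and let f = z_0 X^4 + z_1 X^3 Y + X^2 Y^2 + Y^4 be a binary quartic form over F_q with nonzero discriminant, i.e. z_0(z_0-1)^2 - z_1^2 ≠ 0, and set r = (z_0(z_0-1)^2 - z_1^2)^{-1}. Then the smooth projective model E_f of the affine curve W^2 = z_0 + z_1 Y + Y^2 + Y^4 (genus 1 curve, where W = XW'/Y^2 in suitable coordinates) is isomorphic over F_q to the elliptic curve E_r : S^2 = T^3 + T^2 - r^{-1}, via the map (Y, W) ↦ (S, T) = ((Y^2 + W - 1)Y + z_1, (z_0 - 1) - (Y^2 + W - 1)); in particular these two curves have the same number of F_q-rational points. -/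

import Mathlib

/-- Let `q` be a power of 3 and `f = z₀X⁴ + z₁X³Y + X²Y² + Y⁴` a binary quartic
over `F_q` with nonzero discriminant, i.e. `z₀(z₀-1)² - z₁² ≠ 0`, and let
`r = (z₀(z₀-1)² - z₁²)⁻¹`.  The smooth projective model `E_f` of the affine
curve `W² = z₀ + z₁Y + Y² + Y⁴` is isomorphic over `F_q` to the elliptic curve
`E_r : S² = T³ + T² - r⁻¹` via
`(Y,W) ↦ (S,T) = ((Y²+W-1)Y + z₁, (z₀-1) - (Y²+W-1))`: this map sends points of
`E_f` to points of `E_r`, is injective on affine points, and the two curves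
have the same number of `F_q`-rational points (`E_f` has two points at
infinity, `E_r` has one). -/
theorem stmt19 (F : Type*) [Field F] [Fintype F] [CharP F 3] (z0 z1 : F)
    (hΔ : z0 * (z0 - 1) ^ 2 - z1 ^ 2 ≠ 0) (r : F)
    (hr : r = (z0 * (z0 - 1) ^ 2 - z1 ^ 2)⁻¹) :
    (∀ Y W : F, W ^ 2 = z0 + z1 * Y + Y ^ 2 + Y ^ 4 →
      ((Y ^ 2 + W - 1) * Y + z1) ^ 2
        = ((z0 - 1) - (Y ^ 2 + W - 1)) ^ 3 + ((z0 - 1) - (Y ^ 2 + W - 1)) ^ 2 - r⁻¹) ∧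
    (∀ Y W Y' W' : F, W ^ 2 = z0 + z1 * Y + Y ^ 2 + Y ^ 4 →
      W' ^ 2 = z0 + z1 * Y' + Y' ^ 2 + Y' ^ 4 →
      ((Y ^ 2 + W - 1) * Y + z1 = (Y' ^ 2 + W' - 1) * Y' + z1 ∧
        (z0 - 1) - (Y ^ 2 + W - 1) = (z0 - 1) - (Y' ^ 2 + W' - 1)) →
      Y = Y' ∧ W = W') ∧
    2 + Nat.card {p : F × F // p.2 ^ 2 = z0 + z1 * p.1 + p.1 ^ 2 + p.1 ^ 4}
      = 1 + Nat.card {p : F × F // p.2 ^ 2 = p.1 ^ 3 + p.1 ^ 2 - r⁻¹} := by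
  classical
  have h3 : (3 : F) = 0 := by exact_mod_cast CharP.cast_eq_zero F 3
  have hri : r⁻¹ = z0 * (z0 - 1) ^ 2 - z1 ^ 2 := by rw [hr, inv_inv]
  -- the key polynomial identity (part 1)
  have part1 : ∀ Y W : F, W ^ 2 = z0 + z1 * Y + Y ^ 2 + Y ^ 4 →
      ((Y ^ 2 + W - 1) * Y + z1) ^ 2
        = ((z0 - 1) - (Y ^ 2 + W - 1)) ^ 3 + ((z0 - 1) - (Y ^ 2 + W - 1)) ^ 2 - r⁻¹ := by
    intro Y W h
    linear_combination (W + 4 * Y ^ 2 - 3 * z0 - 1) * h +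
      (-2 * z0 ^ 2 + W * z0 + W * z0 ^ 2 - Y * z1 - Y * z0 * z1 + Y * W * z1 + Y ^ 2 * z0 +
        Y ^ 2 * z0 ^ 2 - Y ^ 2 * W - 2 * Y ^ 2 * W * z0 + 2 * Y ^ 3 * z1 - 2 * Y ^ 4 * z0 +
        2 * Y ^ 4 * W + 2 * Y ^ 6) * h3 + hri
  -- points with `Y² + W - 1 = 0` satisfy `z1 * Y = 1 - z0`
  have hzero : ∀ Y W : F, W ^ 2 = z0 + z1 * Y + Y ^ 2 + Y ^ 4 → Y ^ 2 + W - 1 = 0 →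
      z1 * Y = 1 - z0 := by
    intro Y W h hu
    linear_combination -h + (W + 1 - Y ^ 2) * hu + (-(Y ^ 2)) * h3
  have hz1z0 : z1 = 0 → z0 ≠ 1 := by
    intro hz1 hz0
    apply hΔ
    rw [hz1, hz0]; ring
  -- injectivity on affine points (part 2)
  have part2 : ∀ Y W Y' W' : F, W ^ 2 = z0 + z1 * Y + Y ^ 2 + Y ^ 4 →
      W' ^ 2 = z0 + z1 * Y' + Y' ^ 2 + Y' ^ 4 →
      ((Y ^ 2 + W - 1) * Y + z1 = (Y' ^ 2 + W' - 1) * Y' + z1 ∧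
        (z0 - 1) - (Y ^ 2 + W - 1) = (z0 - 1) - (Y' ^ 2 + W' - 1)) →
      Y = Y' ∧ W = W' := by
    intro Y W Y' W' h h' ⟨hS, hT⟩
    have hu : Y ^ 2 + W - 1 = Y' ^ 2 + W' - 1 := by linear_combination -hT
    have hSY : (Y ^ 2 + W - 1) * Y = (Y ^ 2 + W - 1) * Y' := by
      linear_combination hS - Y' * hu
    by_cases hu0 : Y ^ 2 + W - 1 = 0
    · have hu0' : Y' ^ 2 + W' - 1 = 0 := by linear_combination -hu + hu0
      have e1 := hzero Y W h hu0
      have e2 := hzero Y' W' h' hu0'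
      by_cases hz1 : z1 = 0
      · exact absurd (by linear_combination e1 - Y * hz1 : z0 = 1) (hz1z0 hz1)
      · have hYY : Y = Y' := by
          apply mul_left_cancel₀ hz1
          linear_combination e1 - e2
        refine ⟨hYY, ?_⟩
        linear_combination hu0 - hu0' - (Y + Y') * hYY
    · have hYY : Y = Y' := mul_left_cancel₀ hu0 hSY
      refine ⟨hYY, ?_⟩
      linear_combination hu - (Y + Y') * hYY
  refine ⟨part1, part2, ?_⟩
  -- counting: build a bijection  Option A ≃ B
  have hBnone : ((-z1) ^ 2 : F) = (z0 - 1) ^ 3 + (z0 - 1) ^ 2 - r⁻¹ := by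
    linear_combination hri
  let A := {p : F × F // p.2 ^ 2 = z0 + z1 * p.1 + p.1 ^ 2 + p.1 ^ 4}
  let B := {p : F × F // p.2 ^ 2 = p.1 ^ 3 + p.1 ^ 2 - r⁻¹}
  let φ : Option A → B := fun o => o.elim ⟨(z0 - 1, -z1), by exact hBnone⟩
    (fun a => ⟨((z0 - 1) - (a.1.1 ^ 2 + a.1.2 - 1), (a.1.1 ^ 2 + a.1.2 - 1) * a.1.1 + z1),
      by exact part1 a.1.1 a.1.2 a.2⟩)
  have h2ne : (2 : F) ≠ 0 := by
    intro h2z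
    have : (1 : F) = 0 := by linear_combination h3 - h2z
    exact one_ne_zero this
  have hinj : Function.Injective φ := by
    rintro (_ | ⟨⟨⟨Y, W⟩, h⟩⟩) (_ | ⟨⟨⟨Y', W'⟩, h'⟩⟩) he <;>
      simp only [φ, A, B, Option.elim, Option.some.injEq, Subtype.mk.injEq, Prod.mk.injEq] at he
    · rfl
    · exfalso
      obtain ⟨h2, h1⟩ := he
      have hu0 : Y' ^ 2 + W' - 1 = 0 := by linear_combination h2
      have hz1 : z1 = 0 := by
        have : (2 : F) * z1 = 0 := by linear_combination -h1 - Y' * hu0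
        exact (mul_eq_zero.1 this).resolve_left h2ne
      have := hzero Y' W' h' hu0
      exact hz1z0 hz1 (by linear_combination this - Y' * hz1)
    · exfalso
      obtain ⟨h2, h1⟩ := he
      have hu0 : Y ^ 2 + W - 1 = 0 := by linear_combination -h2
      have hz1 : z1 = 0 := by
        have : (2 : F) * z1 = 0 := by linear_combination h1 - Y * hu0
        exact (mul_eq_zero.1 this).resolve_left h2ne
      have := hzero Y W h hu0
      exact hz1z0 hz1 (by linear_combination this - Y * hz1)
    · obtain ⟨h2, h1⟩ := he
      obtain ⟨e1, e2⟩ := part2 Y W Y' W' (by exact h) (by exact h') ⟨h1, h2⟩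
      subst e1; subst e2; rfl
  have hsurj : Function.Surjective φ := by
    rintro ⟨⟨T, S⟩, hB⟩
    simp only at hB
    by_cases hT : T = z0 - 1
    · subst hT
      have hS2 : (S - z1) * (S + z1) = 0 := by linear_combination hB - hri
      rcases mul_eq_zero.1 hS2 with hc | hc
      · have hSz : S = z1 := by linear_combination hc
        by_cases hz1 : z1 = 0
        · refine ⟨none, ?_⟩
          apply Subtype.ext
          simp only [φ, Option.elim]
          rw [hSz, hz1]; norm_num
        · -- preimage: Y = (1 - z0)/z1, W = 1 - Y²
          set Y := (1 - z0) / z1 with hYdef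
          have hY : z1 * Y = 1 - z0 := by
            rw [hYdef]; field_simp
          have hmem : (1 - Y ^ 2) ^ 2 = z0 + z1 * Y + Y ^ 2 + Y ^ 4 := by
            linear_combination -hY + (-(Y ^ 2)) * h3
          refine ⟨some ⟨(Y, 1 - Y ^ 2), hmem⟩, ?_⟩
          apply Subtype.ext
          simp only [φ, Option.elim]
          have hu0 : Y ^ 2 + (1 - Y ^ 2) - 1 = 0 := by ring
          rw [hu0]
          simp [hSz]
      · refine ⟨none, ?_⟩
        apply Subtype.ext
        simp only [φ, Option.elim]
        have hSz : S = -z1 := by linear_combination hc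
        rw [hSz]
    · -- T ≠ z0 - 1 : preimage with u = z0 - 1 - T
      have hu : z0 - 1 - T ≠ 0 := sub_ne_zero.2 fun h => hT h.symm
      set Y := (S - z1) / (z0 - 1 - T) with hYdef
      have hY : (z0 - 1 - T) * Y = S - z1 := by
        rw [hYdef]; field_simp
      have key : (z0 - 1 - T) ^ 2 *
          ((1 + (z0 - 1 - T) - Y ^ 2) ^ 2 - (z0 + z1 * Y + Y ^ 2 + Y ^ 4)) = 0 := by
        linear_combination
          (3 * z1 - 3 * S + (z0 - 1 - T) * z1 - 2 * (z0 - 1 - T) * S - 3 * (z0 - 1 - T) * Y -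
            2 * (z0 - 1 - T) ^ 2 * Y) * hY +
          (-3 - 2 * (z0 - 1 - T)) * hB - (-3 - 2 * (z0 - 1 - T)) * hri +
          (-2 * z1 ^ 2 + 2 * S * z1 + (z0 - 1 - T) - (z0 - 1 - T) * z1 ^ 2 -
            4 * (z0 - 1 - T) * z0 + 3 * (z0 - 1 - T) * z0 ^ 2 + (z0 - 1 - T) * S * z1 +
            3 * (z0 - 1 - T) ^ 2 - 6 * (z0 - 1 - T) ^ 2 * z0 + 2 * (z0 - 1 - T) ^ 2 * z0 ^ 2 +
            3 * (z0 - 1 - T) ^ 3 - 2 * (z0 - 1 - T) ^ 3 * z0 + (z0 - 1 - T) ^ 4) * h3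
      have hmem0 : (1 + (z0 - 1 - T) - Y ^ 2) ^ 2 - (z0 + z1 * Y + Y ^ 2 + Y ^ 4) = 0 :=
        (mul_eq_zero.1 key).resolve_left (pow_ne_zero 2 hu)
      have hmem : (1 + (z0 - 1 - T) - Y ^ 2) ^ 2 = z0 + z1 * Y + Y ^ 2 + Y ^ 4 :=
        sub_eq_zero.1 hmem0
      refine ⟨some ⟨(Y, 1 + (z0 - 1 - T) - Y ^ 2), hmem⟩, ?_⟩
      apply Subtype.ext
      simp only [φ, Option.elim]
      have hu0 : Y ^ 2 + (1 + (z0 - 1 - T) - Y ^ 2) - 1 = z0 - 1 - T := by ring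
      rw [hu0]
      have e1 : (z0 - 1 - T) * Y + z1 = S := by linear_combination hY
      have e2 : z0 - 1 - (z0 - 1 - T) = T := by ring
      rw [e1, e2]
  have hcard : Nat.card (Option A) = Nat.card B :=
    Nat.card_eq_of_bijective φ ⟨hinj, hsurj⟩
  have hA : Finite A := Subtype.finite
  rw [Finite.card_option] at hcard
  show 2 + Nat.card A = 1 + Nat.card B
  omega
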